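/- Variance decomposition and efficiency comparison: under transportability in mean for a=0, the influence function Φ(O) for φ satisfies Φ = Ψ + Δ with E[Ψ·Δ] = 0, hence Var(Φ(O)) − Var(Ψ(O)) = Var(Δ(O)) ≥ 0; in particular the asymptotic variance of the transportability-in-effect-measure estimator is at least that of the transportability-in-mean estimator, with strict inequality whenever Δ(O) is not almost surely zero. -/
import Mathlib


open scoped Classical BigOperators
open Finset

noncomputable section

/-- Indicator of a proposition. -/
def ind (P : Prop) : ℝ := if P then 1 else 0

/-- Expectation with respect to weights `p` on a finite outcome space. -/
def pexp {Ω : Type*} [Fintype Ω] (p : Ω → ℝ) (f : Ω → ℝ) : ℝ := ∑ ω, p ω * f ω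

/-- Probability of an event. -/
def prob {Ω : Type*} [Fintype Ω] (p : Ω → ℝ) (B : Ω → Prop) : ℝ :=
  pexp p (fun ω => ind (B ω))

/-- Conditional expectation of `f` given event `B`. -/
def cexp {Ω : Type*} [Fintype Ω] (p : Ω → ℝ) (f : Ω → ℝ) (B : Ω → Prop) : ℝ :=
  pexp p (fun ω => f ω * ind (B ω)) / prob p B

/-- Conditional probability of `B` given `C`. -/
def cprob {Ω : Type*} [Fintype Ω] (p : Ω → ℝ) (B C : Ω → Prop) : ℝ :=
  prob p (fun ω => B ω ∧ C ω) / prob p C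

/-- Conditional outcome mean `g_{s,a}(x) = E[Y | X = x, S = s, A = a]`. -/
def gfun {Ω 𝒳 : Type*} [Fintype Ω] (p : Ω → ℝ) (X : Ω → 𝒳) (S A : Ω → ℕ)
    (Y : Ω → ℝ) (s a : ℕ) (x : 𝒳) : ℝ :=
  cexp p Y (fun ω => X ω = x ∧ S ω = s ∧ A ω = a)

/-- Standardized functional `γ_{s,a} = E[ E[Y | X, S=s, A=a] | S=1 ]`. -/
def gam {Ω 𝒳 : Type*} [Fintype Ω] (p : Ω → ℝ) (X : Ω → 𝒳) (S A : Ω → ℕ)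
    (Y : Ω → ℝ) (s a : ℕ) : ℝ :=
  cexp p (fun ω => gfun p X S A Y s a (X ω)) (fun ω => S ω = 1)

/-- Participation probability `p_s(x) = Pr[S = s | X = x]`. -/
def psel {Ω 𝒳 : Type*} [Fintype Ω] (p : Ω → ℝ) (X : Ω → 𝒳) (S : Ω → ℕ)
    (s : ℕ) (x : 𝒳) : ℝ :=
  cprob p (fun ω => S ω = s) (fun ω => X ω = x)

/-- Treatment probability `e_{s,a}(x) = Pr[A = a | X = x, S = s]`. -/
def etrt {Ω 𝒳 : Type*} [Fintype Ω] (p : Ω → ℝ) (X : Ω → 𝒳) (S A : Ω → ℕ)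
    (s a : ℕ) (x : 𝒳) : ℝ :=
  cprob p (fun ω => A ω = a) (fun ω => X ω = x ∧ S ω = s)

/-- Weight `w_{s,a}(X,S,A) = I(S=s, A=a) p_1(X) / (e_{s,a}(X) p_s(X))`. -/
def wgt {Ω 𝒳 : Type*} [Fintype Ω] (p : Ω → ℝ) (X : Ω → 𝒳) (S A : Ω → ℕ)
    (s a : ℕ) (ω : Ω) : ℝ :=
  ind (S ω = s ∧ A ω = a) * psel p X S 1 (X ω) /
    (etrt p X S A s a (X ω) * psel p X S s (X ω))

/-- Influence function `Γ_{s,a}(O)`. -/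
def Gam {Ω 𝒳 : Type*} [Fintype Ω] (p : Ω → ℝ) (X : Ω → 𝒳) (S A : Ω → ℕ)
    (Y : Ω → ℝ) (s a : ℕ) (ω : Ω) : ℝ :=
  (1 / prob p (fun ω' => S ω' = 1)) *
    (ind (S ω = 1) * (gfun p X S A Y s a (X ω) - gam p X S A Y s a)
      + wgt p X S A s a ω * (Y ω - gfun p X S A Y s a (X ω)))

/-- Variance of `f` under `p`. -/
def pvar {Ω : Type*} [Fintype Ω] (p : Ω → ℝ) (f : Ω → ℝ) : ℝ :=
  pexp p (fun ω => (f ω - pexp p f) ^ 2)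

section AuxLemmas

variable {Ω 𝒳 : Type*} [Fintype Ω]

lemma ind_nonneg (P : Prop) : 0 ≤ ind P := by
  unfold ind; split <;> norm_num

lemma pexp_congr_ae (p f g : Ω → ℝ) (h : ∀ ω, p ω ≠ 0 → f ω = g ω) :
    pexp p f = pexp p g := by
  unfold pexp
  refine Finset.sum_congr rfl fun ω _ => ?_
  by_cases hp : p ω = 0
  · simp [hp]
  · rw [h ω hp]

lemma null_of_prob_zero (p : Ω → ℝ) (hp0 : ∀ ω, 0 ≤ p ω) (B : Ω → Prop)
    (h : prob p B = 0) : ∀ ω, B ω → p ω = 0 := by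
  intro ω hB
  unfold prob pexp at h
  have hterm := (Finset.sum_eq_zero_iff_of_nonneg
      (fun ω _ => mul_nonneg (hp0 ω) (ind_nonneg _))).1 h ω (Finset.mem_univ ω)
  simpa [ind, hB] using hterm

lemma prob_nonneg' (p : Ω → ℝ) (hp0 : ∀ ω, 0 ≤ p ω) (B : Ω → Prop) :
    0 ≤ prob p B :=
  Finset.sum_nonneg fun ω _ => mul_nonneg (hp0 ω) (ind_nonneg _)

lemma prob_pos_of (p : Ω → ℝ) (hp0 : ∀ ω, 0 ≤ p ω) (B : Ω → Prop)
    (ω0 : Ω) (h : p ω0 ≠ 0) (hB : B ω0) : 0 < prob p B := by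
  rcases (prob_nonneg' p hp0 B).lt_or_eq with h' | h'
  · exact h'
  · exact absurd (null_of_prob_zero p hp0 B h'.symm ω0 hB) h

/-- Workhorse: `E[ I(S=s,A=a) h(X) (Y - g_{s,a}(X)) ] = 0`. -/
lemma lemA (p : Ω → ℝ) (hp0 : ∀ ω, 0 ≤ p ω) (X : Ω → 𝒳) (S A : Ω → ℕ)
    (Y : Ω → ℝ) (s a : ℕ) (h : 𝒳 → ℝ) :
    pexp p (fun ω => ind (S ω = s ∧ A ω = a) * h (X ω) *
      (Y ω - gfun p X S A Y s a (X ω))) = 0 := by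
  classical
  unfold pexp
  rw [← Finset.sum_fiberwise_of_maps_to
      (fun i (_ : i ∈ Finset.univ) => Finset.mem_image_of_mem X (Finset.mem_univ i))
      (fun ω => p ω * (ind (S ω = s ∧ A ω = a) * h (X ω) *
        (Y ω - gfun p X S A Y s a (X ω))))]
  refine Finset.sum_eq_zero fun x _ => ?_
  have hstep : ∀ ω ∈ Finset.univ.filter (fun ω => X ω = x),
      p ω * (ind (S ω = s ∧ A ω = a) * h (X ω) * (Y ω - gfun p X S A Y s a (X ω)))
        = h x * (p ω * (ind (X ω = x ∧ S ω = s ∧ A ω = a) *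
            (Y ω - gfun p X S A Y s a x))) := by
    intro ω hω
    have hx : X ω = x := (Finset.mem_filter.1 hω).2
    subst hx
    simp only [ind, eq_self_iff_true, true_and]
    ring
  rw [Finset.sum_congr rfl hstep, ← Finset.mul_sum, Finset.sum_filter]
  have hrw : ∀ ω ∈ (Finset.univ : Finset Ω),
      (if X ω = x then p ω * (ind (X ω = x ∧ S ω = s ∧ A ω = a) *
          (Y ω - gfun p X S A Y s a x)) else 0)
        = p ω * (Y ω * ind (X ω = x ∧ S ω = s ∧ A ω = a))
          - gfun p X S A Y s a x * (p ω * ind (X ω = x ∧ S ω = s ∧ A ω = a)) := by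
    intro ω _
    by_cases hX : X ω = x
    · rw [if_pos hX]; ring
    · rw [if_neg hX]
      simp [ind, hX]
  rw [Finset.sum_congr rfl hrw, Finset.sum_sub_distrib, ← Finset.mul_sum]
  have hgx : gfun p X S A Y s a x
      = (∑ ω, p ω * (Y ω * ind (X ω = x ∧ S ω = s ∧ A ω = a)))
        / (∑ ω, p ω * ind (X ω = x ∧ S ω = s ∧ A ω = a)) := rfl
  by_cases hP : (∑ ω, p ω * ind (X ω = x ∧ S ω = s ∧ A ω = a)) = 0
  · have hterm := (Finset.sum_eq_zero_iff_of_nonneg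
        (fun ω _ => mul_nonneg (hp0 ω) (ind_nonneg _))).1 hP
    have hN : (∑ ω, p ω * (Y ω * ind (X ω = x ∧ S ω = s ∧ A ω = a))) = 0 :=
      Finset.sum_eq_zero fun ω hω => by
        have h0 := hterm ω hω
        calc p ω * (Y ω * ind (X ω = x ∧ S ω = s ∧ A ω = a))
            = Y ω * (p ω * ind (X ω = x ∧ S ω = s ∧ A ω = a)) := by ring
          _ = 0 := by rw [h0, mul_zero]
    rw [hN, hP, mul_zero, sub_zero, mul_zero]
  · rw [hgx, div_mul_cancel₀ _ hP, sub_self, mul_zero]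

lemma gfun_transport_pt (p : Ω → ℝ) (hp0 : ∀ ω, 0 ≤ p ω)
    (X : Ω → 𝒳) (S A : Ω → ℕ) (Y : Ω → ℝ)
    (htrans : ∀ x, 0 < prob p (fun ω => X ω = x ∧ S ω = 1) →
      gfun p X S A Y 1 0 x = gfun p X S A Y 0 0 x)
    (ω : Ω) (hpω : p ω ≠ 0) (hS : S ω = 1) :
    gfun p X S A Y 1 0 (X ω) = gfun p X S A Y 0 0 (X ω) :=
  htrans (X ω) (prob_pos_of p hp0 _ ω hpω ⟨rfl, hS⟩)

lemma gam_transport (p : Ω → ℝ) (hp0 : ∀ ω, 0 ≤ p ω)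
    (X : Ω → 𝒳) (S A : Ω → ℕ) (Y : Ω → ℝ)
    (htrans : ∀ x, 0 < prob p (fun ω => X ω = x ∧ S ω = 1) →
      gfun p X S A Y 1 0 x = gfun p X S A Y 0 0 x) :
    gam p X S A Y 1 0 = gam p X S A Y 0 0 := by
  unfold gam cexp
  congr 1
  apply pexp_congr_ae
  intro ω hpω
  by_cases hS : S ω = 1
  · simp only [gfun_transport_pt p hp0 X S A Y htrans ω hpω hS]
  · simp [ind, hS]

lemma EGam (p : Ω → ℝ) (hp0 : ∀ ω, 0 ≤ p ω) (X : Ω → 𝒳) (S A : Ω → ℕ)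
    (Y : Ω → ℝ) (s a : ℕ) (hz0 : prob p (fun ω => S ω = 1) ≠ 0) :
    pexp p (fun ω => Gam p X S A Y s a ω) = 0 := by
  have hP1 : (∑ ω, p ω * ind (S ω = 1)) ≠ 0 := hz0
  have h1 : (∑ ω, p ω * (ind (S ω = 1) *
      (gfun p X S A Y s a (X ω) - gam p X S A Y s a))) = 0 := by
    have hc : ∀ ω ∈ (Finset.univ : Finset Ω),
        p ω * (ind (S ω = 1) * (gfun p X S A Y s a (X ω) - gam p X S A Y s a))
          = p ω * (gfun p X S A Y s a (X ω) * ind (S ω = 1))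
            - gam p X S A Y s a * (p ω * ind (S ω = 1)) :=
      fun ω _ => by ring
    rw [Finset.sum_congr rfl hc, Finset.sum_sub_distrib, ← Finset.mul_sum]
    have hγ : gam p X S A Y s a
        = (∑ ω, p ω * (gfun p X S A Y s a (X ω) * ind (S ω = 1)))
          / (∑ ω, p ω * ind (S ω = 1)) := rfl
    rw [hγ, div_mul_cancel₀ _ hP1, sub_self]
  have h2 : pexp p (fun ω => ind (S ω = s ∧ A ω = a) *
      (psel p X S 1 (X ω) / (etrt p X S A s a (X ω) * psel p X S s (X ω))) *
      (Y ω - gfun p X S A Y s a (X ω))) = 0 :=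
    lemA p hp0 X S A Y s a
      (fun x => psel p X S 1 x / (etrt p X S A s a x * psel p X S s x))
  unfold pexp at h2
  unfold Gam pexp
  have hc : ∀ ω ∈ (Finset.univ : Finset Ω),
      p ω * ((1 / prob p (fun ω' => S ω' = 1)) *
        (ind (S ω = 1) * (gfun p X S A Y s a (X ω) - gam p X S A Y s a)
          + wgt p X S A s a ω * (Y ω - gfun p X S A Y s a (X ω))))
        = (1 / prob p (fun ω' => S ω' = 1)) *
          (p ω * (ind (S ω = 1) * (gfun p X S A Y s a (X ω) - gam p X S A Y s a))
            + p ω * (ind (S ω = s ∧ A ω = a) *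
                (psel p X S 1 (X ω) / (etrt p X S A s a (X ω) * psel p X S s (X ω))) *
                (Y ω - gfun p X S A Y s a (X ω)))) := by
    intro ω _
    unfold wgt
    ring
  rw [Finset.sum_congr rfl hc, ← Finset.mul_sum, Finset.sum_add_distrib, h1, h2]
  norm_num

lemma pexp_sub (p f g : Ω → ℝ) :
    pexp p (fun ω => f ω - g ω) = pexp p f - pexp p g := by
  unfold pexp
  rw [← Finset.sum_sub_distrib]
  exact Finset.sum_congr rfl fun ω _ => by ring

lemma pexp_sq_sub (p f g : Ω → ℝ) :
    pexp p (fun ω => (f ω - g ω) ^ 2)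
      = pexp p (fun ω => f ω ^ 2) + pexp p (fun ω => g ω ^ 2)
        - 2 * pexp p (fun ω => f ω * g ω) := by
  unfold pexp
  rw [Finset.mul_sum, ← Finset.sum_add_distrib, ← Finset.sum_sub_distrib]
  exact Finset.sum_congr rfl fun ω _ => by ring

lemma pvar_eq (p : Ω → ℝ) (hp1 : ∑ ω, p ω = 1) (f : Ω → ℝ) :
    pvar p f = pexp p (fun ω => f ω ^ 2) - (pexp p f) ^ 2 := by
  unfold pvar pexp
  have hc : ∀ ω ∈ (Finset.univ : Finset Ω),
      p ω * (f ω - ∑ ω', p ω' * f ω') ^ 2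
        = p ω * f ω ^ 2 - (2 * ∑ ω', p ω' * f ω') * (p ω * f ω)
          + (∑ ω', p ω' * f ω') ^ 2 * p ω := fun ω _ => by ring
  rw [Finset.sum_congr rfl hc, Finset.sum_add_distrib, Finset.sum_sub_distrib,
    ← Finset.mul_sum, ← Finset.mul_sum, hp1]
  ring

lemma pvar_nonneg (p : Ω → ℝ) (hp0 : ∀ ω, 0 ≤ p ω) (f : Ω → ℝ) :
    0 ≤ pvar p f :=
  Finset.sum_nonneg fun ω _ => mul_nonneg (hp0 ω) (sq_nonneg _)

lemma keyPointwise (p : Ω → ℝ) (hp0 : ∀ ω, 0 ≤ p ω) (X : Ω → 𝒳)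
    (S A : Ω → ℕ) (Y : Ω → ℝ) (hbin : ∀ ω, S ω = 0 ∨ S ω = 1)
    (htrans : ∀ x, 0 < prob p (fun ω => X ω = x ∧ S ω = 1) →
      gfun p X S A Y 1 0 x = gfun p X S A Y 0 0 x)
    (ω : Ω) (hpω : p ω ≠ 0) :
    (Gam p X S A Y 1 1 ω - Gam p X S A Y 0 2 ω) *
      (Gam p X S A Y 1 0 ω - Gam p X S A Y 0 0 ω)
    = ind (S ω = 1 ∧ A ω = 0) *
        ((1 / prob p (fun ω' => S ω' = 1)) ^ 2 *
          (gfun p X S A Y 1 1 (X ω) - gam p X S A Y 1 1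
            - gfun p X S A Y 0 2 (X ω) + gam p X S A Y 0 2) *
          (psel p X S 1 (X ω) / (etrt p X S A 1 0 (X ω) * psel p X S 1 (X ω)))) *
        (Y ω - gfun p X S A Y 1 0 (X ω)) := by
  rcases hbin ω with hS | hS
  · by_cases hA0 : A ω = 0
    · simp [Gam, wgt, ind, hS, hA0]
    · simp only [Gam, wgt, ind, hS, hA0]
      norm_num
  · have hγ := gam_transport p hp0 X S A Y htrans
    have hg := gfun_transport_pt p hp0 X S A Y htrans ω hpω hS
    by_cases hA0 : A ω = 0
    · simp only [Gam, wgt, ind, hS, hA0, hγ, hg]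
      norm_num
      ring
    · simp only [Gam, wgt, ind, hS, hA0, hγ, hg]
      norm_num

end AuxLemmas


theorem statement11
    {Ω 𝒳 : Type*} [Fintype Ω] (p : Ω → ℝ)
    (hp0 : ∀ ω, 0 ≤ p ω) (hp1 : ∑ ω, p ω = 1)
    (X : Ω → 𝒳) (S A : Ω → ℕ) (Y : Ω → ℝ)
    (hbin : ∀ ω, S ω = 0 ∨ S ω = 1)
    (hz0 : 0 < prob p (fun ω => S ω = 1)) (hz1 : prob p (fun ω => S ω = 1) < 1)
    (hposp : ∀ x, 0 < prob p (fun ω => X ω = x) →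
      0 < psel p X S 1 x ∧ psel p X S 1 x < 1)
    (hpose : ∀ x, 0 < prob p (fun ω => X ω = x) →
      0 < etrt p X S A 1 1 x ∧ 0 < etrt p X S A 1 0 x ∧
        0 < etrt p X S A 0 2 x ∧ 0 < etrt p X S A 0 0 x)
    (htrans : ∀ x, 0 < prob p (fun ω => X ω = x ∧ S ω = 1) →
      gfun p X S A Y 1 0 x = gfun p X S A Y 0 0 x) :
    (∀ ω, (Gam p X S A Y 1 1 ω - Gam p X S A Y 1 0 ω -
        Gam p X S A Y 0 2 ω + Gam p X S A Y 0 0 ω) =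
      (Gam p X S A Y 1 1 ω - Gam p X S A Y 0 2 ω) -
        (Gam p X S A Y 1 0 ω - Gam p X S A Y 0 0 ω)) ∧
    pexp p (fun ω =>
      (Gam p X S A Y 1 1 ω - Gam p X S A Y 0 2 ω) *
        (Gam p X S A Y 1 0 ω - Gam p X S A Y 0 0 ω)) = 0 ∧
    pvar p (fun ω => Gam p X S A Y 1 1 ω - Gam p X S A Y 1 0 ω -
        Gam p X S A Y 0 2 ω + Gam p X S A Y 0 0 ω) -
      pvar p (fun ω => Gam p X S A Y 1 1 ω - Gam p X S A Y 0 2 ω) =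
      pvar p (fun ω => Gam p X S A Y 1 0 ω - Gam p X S A Y 0 0 ω) ∧
    0 ≤ pvar p (fun ω => Gam p X S A Y 1 0 ω - Gam p X S A Y 0 0 ω) ∧
    ((∃ ω, 0 < p ω ∧ Gam p X S A Y 1 0 ω - Gam p X S A Y 0 0 ω ≠ 0) →
      pvar p (fun ω => Gam p X S A Y 1 1 ω - Gam p X S A Y 0 2 ω) <
        pvar p (fun ω => Gam p X S A Y 1 1 ω - Gam p X S A Y 1 0 ω -
          Gam p X S A Y 0 2 ω + Gam p X S A Y 0 0 ω)) := by
  classical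
  have hz0' : prob p (fun ω => S ω = 1) ≠ 0 := ne_of_gt hz0
  -- Part 1: pointwise rearrangement
  have part1 : ∀ ω, (Gam p X S A Y 1 1 ω - Gam p X S A Y 1 0 ω -
      Gam p X S A Y 0 2 ω + Gam p X S A Y 0 0 ω) =
      (Gam p X S A Y 1 1 ω - Gam p X S A Y 0 2 ω) -
        (Gam p X S A Y 1 0 ω - Gam p X S A Y 0 0 ω) := fun ω => by ring
  -- Part 2: orthogonality
  have part2 : pexp p (fun ω =>
      (Gam p X S A Y 1 1 ω - Gam p X S A Y 0 2 ω) *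
        (Gam p X S A Y 1 0 ω - Gam p X S A Y 0 0 ω)) = 0 := by
    rw [pexp_congr_ae p _ _ (fun ω hpω =>
      keyPointwise p hp0 X S A Y hbin htrans ω hpω)]
    exact lemA p hp0 X S A Y 1 0
      (fun x => (1 / prob p (fun ω' => S ω' = 1)) ^ 2 *
        (gfun p X S A Y 1 1 x - gam p X S A Y 1 1
          - gfun p X S A Y 0 2 x + gam p X S A Y 0 2) *
        (psel p X S 1 x / (etrt p X S A 1 0 x * psel p X S 1 x)))
  -- mean of Δ
  have hEΔ : pexp p (fun ω => Gam p X S A Y 1 0 ω - Gam p X S A Y 0 0 ω) = 0 := by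
    rw [pexp_sub p (fun ω => Gam p X S A Y 1 0 ω) (fun ω => Gam p X S A Y 0 0 ω),
      EGam p hp0 X S A Y 1 0 hz0', EGam p hp0 X S A Y 0 0 hz0', sub_zero]
  -- Part 3: variance decomposition
  have hfun : (fun ω => Gam p X S A Y 1 1 ω - Gam p X S A Y 1 0 ω -
      Gam p X S A Y 0 2 ω + Gam p X S A Y 0 0 ω) =
      (fun ω => (Gam p X S A Y 1 1 ω - Gam p X S A Y 0 2 ω) -
        (Gam p X S A Y 1 0 ω - Gam p X S A Y 0 0 ω)) := funext part1
  have part3 : pvar p (fun ω => Gam p X S A Y 1 1 ω - Gam p X S A Y 1 0 ω -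
        Gam p X S A Y 0 2 ω + Gam p X S A Y 0 0 ω) -
      pvar p (fun ω => Gam p X S A Y 1 1 ω - Gam p X S A Y 0 2 ω) =
      pvar p (fun ω => Gam p X S A Y 1 0 ω - Gam p X S A Y 0 0 ω) := by
    rw [hfun, pvar_eq p hp1, pvar_eq p hp1, pvar_eq p hp1,
      pexp_sq_sub p (fun ω => Gam p X S A Y 1 1 ω - Gam p X S A Y 0 2 ω)
        (fun ω => Gam p X S A Y 1 0 ω - Gam p X S A Y 0 0 ω),
      pexp_sub p (fun ω => Gam p X S A Y 1 1 ω - Gam p X S A Y 0 2 ω)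
        (fun ω => Gam p X S A Y 1 0 ω - Gam p X S A Y 0 0 ω),
      part2, hEΔ]
    ring
  -- Part 4
  have part4 : 0 ≤ pvar p (fun ω => Gam p X S A Y 1 0 ω - Gam p X S A Y 0 0 ω) :=
    pvar_nonneg p hp0 _
  refine ⟨part1, part2, part3, part4, ?_⟩
  -- Part 5
  rintro ⟨ω0, hpω0, hΔ0⟩
  have hpos : 0 < pvar p (fun ω => Gam p X S A Y 1 0 ω - Gam p X S A Y 0 0 ω) := by
    unfold pvar
    rw [hEΔ]
    have hterm : ∀ ω ∈ (Finset.univ : Finset Ω),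
        0 ≤ p ω * ((Gam p X S A Y 1 0 ω - Gam p X S A Y 0 0 ω) - 0) ^ 2 :=
      fun ω _ => mul_nonneg (hp0 ω) (sq_nonneg _)
    have hsq : 0 < (Gam p X S A Y 1 0 ω0 - Gam p X S A Y 0 0 ω0) ^ 2 :=
      lt_of_le_of_ne (sq_nonneg _) (Ne.symm (pow_ne_zero 2 hΔ0))
    calc (0:ℝ) < p ω0 * ((Gam p X S A Y 1 0 ω0 - Gam p X S A Y 0 0 ω0) - 0) ^ 2 := by
          rw [sub_zero]; exact mul_pos hpω0 hsq
      _ ≤ _ := Finset.single_le_sum hterm (Finset.mem_univ ω0)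
  linarith [part3]
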